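/- arXiv:2210.16882 — 4 statements merged into one kernel-verified Lean document; each statement's English description precedes it below -/
import Mathlib

section
/- Let d ∈ ℕ and let f : ℝ^d × ℝ → ℝ^d be continuously differentiable and satisfy the geometry compatibility (incompressibility) condition Σ_{i=1}^d ∂_{x_i} f_i(x,λ) = 0 for all (x,λ) ∈ ℝ^d × ℝ. Let u : ℝ^d → ℝ be continuously differentiable and define the vector field X : ℝ^d → ℝ^d by X(x) := ∫₀^{u(x)} f(x,λ) dλ (a signed integral). Then X is differentiable and its divergence satisfies div X(x) = ⟨ f(x,u(x)), ∇u(x) ⟩ for every x ∈ ℝ^d, where ⟨·,·⟩ is the Euclidean inner product. -/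
open MeasureTheory RealInnerProductSpace
open Set

/-- The (Euclidean) divergence of a vector field `V : ℝ^d → ℝ^d`. -/
noncomputable def vdiv {d : ℕ} (V : EuclideanSpace ℝ (Fin d) → EuclideanSpace ℝ (Fin d))
    (x : EuclideanSpace ℝ (Fin d)) : ℝ :=
  ∑ i : Fin d, fderiv ℝ V x (EuclideanSpace.single i (1 : ℝ)) i

section Aux

variable {d : ℕ} {f : EuclideanSpace ℝ (Fin d) × ℝ → EuclideanSpace ℝ (Fin d)}
  (hf : ContDiff ℝ 1 f)
include hf

theorem aux_int (y : EuclideanSpace ℝ (Fin d)) (a b : ℝ) :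
    IntervalIntegrable (fun lam => f (y, lam)) volume a b :=
  (hf.continuous.comp (Continuous.prodMk_right y)).intervalIntegrable a b

theorem aux1 (x₀ : EuclideanSpace ℝ (Fin d)) (t₀ : ℝ) :
    HasFDerivAt (fun y : EuclideanSpace ℝ (Fin d) => ∫ lam in (0:ℝ)..t₀, f (y, lam))
      (∫ lam in (0:ℝ)..t₀,
        (fderiv ℝ f (x₀, lam)).comp (ContinuousLinearMap.inl ℝ (EuclideanSpace ℝ (Fin d)) ℝ)) x₀ := by
  have hdf : Continuous (fderiv ℝ f) := hf.continuous_fderiv one_ne_zero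
  obtain ⟨C, hC⟩ : ∃ C, ∀ p ∈ (Metric.closedBall x₀ 1 ×ˢ uIcc 0 t₀ :
      Set (EuclideanSpace ℝ (Fin d) × ℝ)), ‖fderiv ℝ f p‖ ≤ C :=
    ((isCompact_closedBall x₀ 1).prod isCompact_uIcc).exists_bound_of_continuousOn
      hdf.continuousOn
  apply intervalIntegral.hasFDerivAt_integral_of_dominated_of_fderiv_le
    (F' := fun x lam => (fderiv ℝ f (x, lam)).comp (ContinuousLinearMap.inl ℝ _ ℝ))
    (bound := fun _ => C) (Metric.ball_mem_nhds x₀ one_pos)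
  · filter_upwards with x using
      (hf.continuous.comp (Continuous.prodMk_right x)).aestronglyMeasurable
  · exact aux_int hf x₀ 0 t₀
  · exact ((hdf.comp (Continuous.prodMk_right x₀)).clm_comp continuous_const).aestronglyMeasurable
  · filter_upwards with lam hlam x hx
    refine ContinuousLinearMap.opNorm_le_bound _ ?_ fun v => ?_
    · exact le_trans (norm_nonneg _) (hC (x₀, lam) ⟨Metric.mem_closedBall_self zero_le_one,
        uIoc_subset_uIcc hlam⟩)
    · calc ‖(fderiv ℝ f (x, lam)) ((ContinuousLinearMap.inl ℝ _ ℝ) v)‖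
          ≤ ‖fderiv ℝ f (x, lam)‖ * ‖(ContinuousLinearMap.inl ℝ _ ℝ) v‖ :=
            ContinuousLinearMap.le_opNorm _ _
        _ ≤ C * ‖v‖ := by
            have h1 : ‖(ContinuousLinearMap.inl ℝ (EuclideanSpace ℝ (Fin d)) ℝ) v‖ = ‖v‖ := by
              simp [Prod.norm_def]
            rw [h1]
            gcongr
            exact hC (x, lam) ⟨Metric.ball_subset_closedBall hx, uIoc_subset_uIcc hlam⟩
  · exact intervalIntegrable_const
  · filter_upwards with lam hlam x hx
    exact ((hf.differentiable one_ne_zero (x, lam)).hasFDerivAt).comp x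
      (hasFDerivAt_prodMk_left x lam)


theorem aux2 (x₀ : EuclideanSpace ℝ (Fin d)) (t₀ : ℝ) :
    HasFDerivAt (fun p : EuclideanSpace ℝ (Fin d) × ℝ => ∫ lam in (0:ℝ)..p.2, f (p.1, lam))
      ((∫ lam in (0:ℝ)..t₀,
          (fderiv ℝ f (x₀, lam)).comp (ContinuousLinearMap.inl ℝ _ ℝ)).comp
            (ContinuousLinearMap.fst ℝ (EuclideanSpace ℝ (Fin d)) ℝ)
        + (ContinuousLinearMap.snd ℝ (EuclideanSpace ℝ (Fin d)) ℝ).smulRight (f (x₀, t₀)))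
      (x₀, t₀) := by
  have h₁ : HasFDerivAt (fun p : EuclideanSpace ℝ (Fin d) × ℝ => ∫ lam in (0:ℝ)..t₀, f (p.1, lam))
      ((∫ lam in (0:ℝ)..t₀,
          (fderiv ℝ f (x₀, lam)).comp (ContinuousLinearMap.inl ℝ _ ℝ)).comp
            (ContinuousLinearMap.fst ℝ (EuclideanSpace ℝ (Fin d)) ℝ)) (x₀, t₀) :=
    by have := (aux1 hf x₀ t₀).comp (x₀, t₀) (hasFDerivAt_fst (𝕜 := ℝ) (p := (x₀, t₀))); exact this
  have h₂ : HasFDerivAt (fun p : EuclideanSpace ℝ (Fin d) × ℝ => ∫ lam in t₀..p.2, f (p.1, lam))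
      ((ContinuousLinearMap.snd ℝ (EuclideanSpace ℝ (Fin d)) ℝ).smulRight (f (x₀, t₀)))
      (x₀, t₀) := by
    refine HasFDerivAt.of_isLittleO (Asymptotics.isLittleO_iff.mpr ?_)
    intro c hc
    obtain ⟨δ, hδ, hfc⟩ := Metric.continuousAt_iff.mp (hf.continuous.continuousAt (x := ((x₀, t₀) : EuclideanSpace ℝ (Fin d) × ℝ))) c hc
    filter_upwards [Metric.ball_mem_nhds ((x₀, t₀) : EuclideanSpace ℝ (Fin d) × ℝ) hδ] with p hp
    have hbound : ∀ lam ∈ Set.uIoc t₀ p.2, ‖f (p.1, lam) - f (x₀, t₀)‖ ≤ c := by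
      intro lam hlam
      have h1 : dist lam t₀ ≤ dist p.2 t₀ := by
        rw [Real.dist_eq, Real.dist_eq]
        exact abs_sub_left_of_mem_uIcc (uIoc_subset_uIcc hlam)
      have h2 : dist ((p.1, lam) : EuclideanSpace ℝ (Fin d) × ℝ) (x₀, t₀) < δ := by
        rw [Metric.mem_ball, Prod.dist_eq] at hp
        rw [Prod.dist_eq]
        exact max_lt (lt_of_le_of_lt (le_max_left _ _) hp)
          (lt_of_le_of_lt (h1.trans (le_max_right _ _)) hp)
      have := hfc h2
      rw [dist_eq_norm] at this
      exact this.le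
    have key : (∫ lam in t₀..p.2, f (p.1, lam)) - (∫ lam in t₀..t₀, f ((x₀, t₀).1, lam))
        - ((ContinuousLinearMap.snd ℝ (EuclideanSpace ℝ (Fin d)) ℝ).smulRight (f (x₀, t₀)))
          (p - (x₀, t₀))
        = ∫ lam in t₀..p.2, (f (p.1, lam) - f (x₀, t₀)) := by
      rw [intervalIntegral.integral_same, sub_zero,
        intervalIntegral.integral_sub (aux_int hf p.1 t₀ p.2) intervalIntegrable_const,
        intervalIntegral.integral_const]
      simp [Prod.snd_sub]
    rw [key]
    calc ‖∫ lam in t₀..p.2, (f (p.1, lam) - f (x₀, t₀))‖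
        ≤ c * |p.2 - t₀| := intervalIntegral.norm_integral_le_of_norm_le_const hbound
      _ ≤ c * ‖p - (x₀, t₀)‖ := by
          gcongr
          simpa using norm_snd_le (p - (x₀, t₀))
  have heq : (fun p : EuclideanSpace ℝ (Fin d) × ℝ => ∫ lam in (0:ℝ)..p.2, f (p.1, lam))
      = fun p => (∫ lam in (0:ℝ)..t₀, f (p.1, lam)) + ∫ lam in t₀..p.2, f (p.1, lam) :=
    funext fun p => (intervalIntegral.integral_add_adjacent_intervals
      (aux_int hf p.1 0 t₀) (aux_int hf p.1 t₀ p.2)).symm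
  rw [heq]
  exact h₁.add h₂

end Aux

theorem aux_lin {d : ℕ} (l : EuclideanSpace ℝ (Fin d) →L[ℝ] ℝ) (v : EuclideanSpace ℝ (Fin d)) :
    ∑ i, v i * l (EuclideanSpace.single i 1) = l v := by
  have hv : v = ∑ i, v i • EuclideanSpace.single i (1:ℝ) := by
    ext j
    rw [WithLp.ofLp_sum, Finset.sum_apply]
    simp [EuclideanSpace.single_apply]
  conv_rhs => rw [hv, map_sum]
  simp [_root_.map_smul]

set_option maxHeartbeats 1000000 in
/-- If `f : ℝ^d × ℝ → ℝ^d` is `C¹` and divergence-free in `x` for every fixed `λ`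
(geometry compatibility), and `u : ℝ^d → ℝ` is `C¹`, then the vector field
`X(x) = ∫₀^{u(x)} f(x,λ) dλ` is differentiable with `div X(x) = ⟨f(x,u(x)), ∇u(x)⟩`. -/
theorem div_of_integrated_flux
    (d : ℕ)
    (f : EuclideanSpace ℝ (Fin d) × ℝ → EuclideanSpace ℝ (Fin d))
    (hf : ContDiff ℝ 1 f)
    (hdiv : ∀ (x : EuclideanSpace ℝ (Fin d)) (lam : ℝ),
      vdiv (fun y => f (y, lam)) x = 0)
    (u : EuclideanSpace ℝ (Fin d) → ℝ) (hu : ContDiff ℝ 1 u)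
    (X : EuclideanSpace ℝ (Fin d) → EuclideanSpace ℝ (Fin d))
    (hX : ∀ x, X x = ∫ lam in (0:ℝ)..(u x), f (x, lam)) :
    ∀ x, DifferentiableAt ℝ X x ∧ vdiv X x = ⟪f (x, u x), gradient u x⟫ := by
  intro x
  classical
  have hDu := (hu.differentiable one_ne_zero x).hasFDerivAt
  have hM : HasFDerivAt (fun y : EuclideanSpace ℝ (Fin d) => ((y, u y) :
      EuclideanSpace ℝ (Fin d) × ℝ))
      ((ContinuousLinearMap.id ℝ (EuclideanSpace ℝ (Fin d))).prod (fderiv ℝ u x)) x :=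
    (hasFDerivAt_id x).prodMk hDu
  have hG := aux2 hf x (u x)
  have hXeq : X = fun y => ∫ lam in (0:ℝ)..(u y), f (y, lam) := funext hX
  have hcomp := hG.comp x hM
  simp only [Function.comp_def] at hcomp
  have hXd : HasFDerivAt X
      (((∫ lam in (0:ℝ)..(u x), (fderiv ℝ f (x, lam)).comp
          (ContinuousLinearMap.inl ℝ (EuclideanSpace ℝ (Fin d)) ℝ)).comp
            (ContinuousLinearMap.fst ℝ (EuclideanSpace ℝ (Fin d)) ℝ)
        + (ContinuousLinearMap.snd ℝ (EuclideanSpace ℝ (Fin d)) ℝ).smulRight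
          (f (x, u x))).comp
        ((ContinuousLinearMap.id ℝ (EuclideanSpace ℝ (Fin d))).prod (fderiv ℝ u x))) x := by
    rw [hXeq]
    exact hcomp
  refine ⟨hXd.differentiableAt, ?_⟩
  rw [vdiv, hXd.fderiv]
  have hIop : IntervalIntegrable (fun lam => (fderiv ℝ f (x, lam)).comp
      (ContinuousLinearMap.inl ℝ (EuclideanSpace ℝ (Fin d)) ℝ)) volume 0 (u x) :=
    (((hf.continuous_fderiv one_ne_zero).comp (Continuous.prodMk_right x)).clm_comp
      continuous_const).intervalIntegrable 0 (u x)
  have hstep : ∀ i : Fin d,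
      ((((∫ lam in (0:ℝ)..(u x), (fderiv ℝ f (x, lam)).comp
          (ContinuousLinearMap.inl ℝ (EuclideanSpace ℝ (Fin d)) ℝ)).comp
            (ContinuousLinearMap.fst ℝ (EuclideanSpace ℝ (Fin d)) ℝ)
        + (ContinuousLinearMap.snd ℝ (EuclideanSpace ℝ (Fin d)) ℝ).smulRight
          (f (x, u x))).comp
        ((ContinuousLinearMap.id ℝ (EuclideanSpace ℝ (Fin d))).prod (fderiv ℝ u x)))
        (EuclideanSpace.single i 1)) i
      = (∫ lam in (0:ℝ)..(u x),
          ((fderiv ℝ f (x, lam)) (EuclideanSpace.single i 1, 0)) i)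
        + fderiv ℝ u x (EuclideanSpace.single i 1) * f (x, u x) i := by
    intro i
    have hIi : IntervalIntegrable (fun lam =>
        (fderiv ℝ f (x, lam)) (EuclideanSpace.single i 1, (0:ℝ))) volume 0 (u x) :=
      (((hf.continuous_fderiv one_ne_zero).comp (Continuous.prodMk_right x)).clm_apply
        continuous_const).intervalIntegrable 0 (u x)
    simp only [ContinuousLinearMap.comp_apply, ContinuousLinearMap.add_apply,
      ContinuousLinearMap.prod_apply, ContinuousLinearMap.coe_id', id_eq,
      ContinuousLinearMap.coe_fst', ContinuousLinearMap.smulRight_apply,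
      ContinuousLinearMap.coe_snd']
    rw [ContinuousLinearMap.intervalIntegral_apply hIop (EuclideanSpace.single i 1)]
    have happ : (∫ lam in (0:ℝ)..(u x), ((fderiv ℝ f (x, lam)).comp
        (ContinuousLinearMap.inl ℝ (EuclideanSpace ℝ (Fin d)) ℝ)) (EuclideanSpace.single i 1)) i
        = ∫ lam in (0:ℝ)..(u x), ((fderiv ℝ f (x, lam)) (EuclideanSpace.single i 1, 0)) i := by
      have := ((EuclideanSpace.proj i : EuclideanSpace ℝ (Fin d) →L[ℝ] ℝ)
        |>.intervalIntegral_comp_comm (𝕜 := ℝ) (by simpa using hIi))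
      simpa using this.symm
    simp only [PiLp.add_apply, PiLp.smul_apply, smul_eq_mul]
    rw [← happ]
  rw [Finset.sum_congr rfl fun i _ => hstep i, Finset.sum_add_distrib]
  have hzero : (∑ i : Fin d, ∫ lam in (0:ℝ)..(u x),
      ((fderiv ℝ f (x, lam)) (EuclideanSpace.single i 1, 0)) i) = 0 := by
    have hIi : ∀ i : Fin d, IntervalIntegrable (fun lam =>
        ((fderiv ℝ f (x, lam)) (EuclideanSpace.single i 1, (0:ℝ))) i) volume 0 (u x) := by
      intro i
      exact ((EuclideanSpace.proj (𝕜 := ℝ) i).continuous.comp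
        (((hf.continuous_fderiv one_ne_zero).comp (Continuous.prodMk_right x)).clm_apply
          continuous_const)).intervalIntegrable 0 (u x)
    rw [← intervalIntegral.integral_finset_sum (fun i _ => hIi i)]
    have : ∀ lam : ℝ, (∑ i : Fin d,
        ((fderiv ℝ f (x, lam)) (EuclideanSpace.single i 1, 0)) i) = 0 := by
      intro lam
      have h0 := hdiv x lam
      rw [vdiv] at h0
      have hfd2 : fderiv ℝ (fun y => f (y, lam)) x = (fderiv ℝ f (x, lam)).comp
          (ContinuousLinearMap.inl ℝ (EuclideanSpace ℝ (Fin d)) ℝ) :=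
        (((hf.differentiable one_ne_zero (x, lam)).hasFDerivAt).comp x
          (hasFDerivAt_prodMk_left x lam)).fderiv
      rw [hfd2] at h0
      simpa using h0
    simp only [this, intervalIntegral.integral_zero]
  rw [hzero, zero_add]
  rw [real_inner_comm]
  unfold gradient
  rw [InnerProductSpace.toDual_symm_apply]
  rw [← aux_lin (fderiv ℝ u x) (f (x, u x))]
  exact Finset.sum_congr rfl fun i _ => mul_comm _ _
end

section
/- Let d ∈ ℕ and let f : ℝ^d × ℝ → ℝ^d be continuously differentiable and satisfy the geometry compatibility (incompressibility) condition Σ_{i=1}^d ∂_{x_i} f_i(x,λ) = 0 for all (x,λ) ∈ ℝ^d × ℝ. Let u : ℝ^d → ℝ be continuously differentiable with compact support. Then ∫_{ℝ^d} ⟨ f(x,u(x)), ∇u(x) ⟩ dx = 0. -/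
open MeasureTheory RealInnerProductSpace
open Set

abbrev Euc (n : ℕ) : Type := EuclideanSpace ℝ (Fin n)

theorem div_int_zero {n : ℕ} (w : (Fin (n+1) → ℝ) → (Fin (n+1) → ℝ))
    (w' : (Fin (n+1) → ℝ) → ((Fin (n+1) → ℝ) →L[ℝ] (Fin (n+1) → ℝ)))
    (hw : ∀ x, HasFDerivAt w (w' x) x)
    (R : ℝ) (hR : 0 < R)
    (hsupp : ∀ x : Fin (n+1) → ℝ, R < ‖x‖ → w x = 0)
    (hint : Integrable (fun x => ∑ i, w' x (Pi.single i 1) i)) :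
    ∫ x, ∑ i, w' x (Pi.single i 1) i = 0 := by
  set a : Fin (n+1) → ℝ := fun _ => -(R+1) with ha
  set b : Fin (n+1) → ℝ := fun _ => (R+1) with hb
  have hab : a ≤ b := fun i => by simp only [ha, hb]; linarith
  have hzero : ∀ x : Fin (n+1) → ℝ, R < ‖x‖ → w' x = 0 := by
    intro x hx
    have hopen : IsOpen {y : Fin (n+1) → ℝ | R < ‖y‖} :=
      isOpen_lt continuous_const continuous_norm
    have heq : w =ᶠ[nhds x] (fun _ => 0) :=
      Filter.eventuallyEq_of_mem (hopen.mem_nhds hx) (fun y hy => hsupp y hy)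
    have h1 : HasFDerivAt w (0 : (Fin (n+1) → ℝ) →L[ℝ] (Fin (n+1) → ℝ)) x :=
      (hasFDerivAt_const (0 : Fin (n+1) → ℝ) x).congr_of_eventuallyEq heq
    exact (hw x).unique h1
  have hnorm : ∀ x : Fin (n+1) → ℝ, x ∉ Icc a b → R < ‖x‖ := by
    intro x hx
    by_contra h
    push_neg at h
    refine hx ⟨fun i => ?_, fun i => ?_⟩ <;>
    · have h2 := abs_le.1 ((norm_le_pi_norm x i).trans h)
      simp only [ha, hb]
      linarith [h2.1, h2.2]
  have hcont : Continuous w :=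
    continuous_iff_continuousAt.2 fun x => (hw x).differentiableAt.continuousAt
  have key := MeasureTheory.integral_divergence_of_hasFDerivAt_off_countable a b hab w w'
    ∅ countable_empty hcont.continuousOn
    (fun x _ => hw x) hint.integrableOn
  have hfaces : ∀ i : Fin (n+1),
      ((∫ x in Icc (a ∘ i.succAbove) (b ∘ i.succAbove), w (i.insertNth (b i) x) i) -
        ∫ x in Icc (a ∘ i.succAbove) (b ∘ i.succAbove), w (i.insertNth (a i) x) i) = 0 := by
    intro i
    have key1 : ∀ (c : ℝ), R + 1 ≤ |c| → ∀ x : Fin n → ℝ, w (i.insertNth c x) = 0 := by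
      intro c hc x
      apply hsupp
      have h3 := norm_le_pi_norm (i.insertNth c x : Fin (n+1) → ℝ) i
      rw [Fin.insertNth_apply_same] at h3
      rw [Real.norm_eq_abs] at h3
      linarith
    have h1 : ∀ x : Fin n → ℝ, w (i.insertNth (b i) x) = 0 :=
      key1 (b i) (by simp only [hb]; rw [abs_of_pos (by linarith)]) 
    have h2 : ∀ x : Fin n → ℝ, w (i.insertNth (a i) x) = 0 :=
      key1 (a i) (by simp only [ha]; rw [abs_of_neg (by linarith)]; linarith)
    simp [h1, h2]
  rw [Finset.sum_congr rfl (fun i _ => hfaces i), Finset.sum_const, smul_zero] at key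
  rw [← key]
  symm
  apply setIntegral_eq_integral_of_forall_compl_eq_zero
  intro x hx
  rw [hzero x (hnorm x hx)]
  simp

set_option maxHeartbeats 2000000 in
theorem aux_integral_flux (n : ℕ)
    (f : Euc (n+1) × ℝ → Euc (n+1))
    (hf : ContDiff ℝ 1 f)
    (hdiv' : ∀ (x : Euc (n+1)) (t : ℝ),
      ∑ i : Fin (n+1), (fderiv ℝ f (x, t)) (EuclideanSpace.single i (1:ℝ), 0) i = 0)
    (u : Euc (n+1) → ℝ) (hu : ContDiff ℝ 1 u)
    (husupp : HasCompactSupport u) :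
    ∫ x : Euc (n+1), ⟪f (x, u x), gradient u x⟫ = 0 := by
  have hfp : ∀ q : Euc (n+1) × ℝ, HasFDerivAt f (fderiv ℝ f q) q :=
    fun q => (hf.differentiable one_ne_zero q).hasFDerivAt
  have hfc : Continuous (fderiv ℝ f) := hf.continuous_fderiv one_ne_zero
  have hup : ∀ x : Euc (n+1), HasFDerivAt u (fderiv ℝ u x) x :=
    fun x => (hu.differentiable one_ne_zero x).hasFDerivAt
  have huc : Continuous (fderiv ℝ u) := hu.continuous_fderiv one_ne_zero
  set M₀ : Euc (n+1) × ℝ →L[ℝ] Euc (n+1) × ℝ :=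
    (ContinuousLinearMap.fst ℝ (Euc (n+1)) ℝ).prod (0 : Euc (n+1) × ℝ →L[ℝ] ℝ) with hM₀
  set M₁ : Euc (n+1) × ℝ →L[ℝ] Euc (n+1) × ℝ :=
    (0 : Euc (n+1) × ℝ →L[ℝ] Euc (n+1)).prod (ContinuousLinearMap.snd ℝ (Euc (n+1)) ℝ) with hM₁
  set L : ℝ → (Euc (n+1) × ℝ →L[ℝ] Euc (n+1) × ℝ) := fun s => M₀ + s • M₁ with hL
  have hLapp : ∀ (s : ℝ) (q : Euc (n+1) × ℝ), L s q = (q.1, s * q.2) := by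
    intro s q
    simp [hL, hM₀, hM₁, Prod.ext_iff, smul_eq_mul]
  have hLcont : Continuous L := continuous_const.add (continuous_id.smul continuous_const)
  set g' : Euc (n+1) × ℝ → ℝ → (Euc (n+1) × ℝ →L[ℝ] Euc (n+1)) :=
    fun p s => (fderiv ℝ f (p.1, s * p.2)).comp (L s) with hg'
  set G : Euc (n+1) × ℝ → Euc (n+1) := fun p => ∫ s in Ioc (0:ℝ) 1, f (p.1, s * p.2) with hGdef
  have gdiff : ∀ (p : Euc (n+1) × ℝ) (s : ℝ),
      HasFDerivAt (fun q : Euc (n+1) × ℝ => f (q.1, s * q.2)) (g' p s) p := by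
    intro p s
    have h0 := (hfp (L s p)).comp p (L s).hasFDerivAt
    simp only [Function.comp_def, hLapp] at h0
    exact h0
  have hg'cont : ∀ p : Euc (n+1) × ℝ, Continuous (g' p) := by
    intro p
    exact (hfc.comp (continuous_const.prodMk ((continuous_id'.mul continuous_const)))).clm_comp
      hLcont
  have hg'int : ∀ p : Euc (n+1) × ℝ, Integrable (g' p) (volume.restrict (Ioc (0:ℝ) 1)) := by
    intro p
    exact ((hg'cont p).continuousOn.integrableOn_compact isCompact_Icc).mono_set
      Ioc_subset_Icc_self
  have hfsint : ∀ p : Euc (n+1) × ℝ,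
      Integrable (fun s => f (p.1, s * p.2)) (volume.restrict (Ioc (0:ℝ) 1)) := by
    intro p
    exact ((hf.continuous.comp
      (continuous_const.prodMk (continuous_id'.mul continuous_const))).continuousOn.integrableOn_compact
        isCompact_Icc).mono_set Ioc_subset_Icc_self
  have hGdiff : ∀ p : Euc (n+1) × ℝ, HasFDerivAt G (∫ s in Ioc (0:ℝ) 1, g' p s) p := by
    intro p₀
    set K : Set (Euc (n+1) × ℝ) :=
      (Metric.closedBall p₀.1 1) ×ˢ (Icc (-(|p₀.2|+1)) (|p₀.2|+1)) with hK
    have hKc : IsCompact K := (isCompact_closedBall _ _).prod isCompact_Icc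
    obtain ⟨C, hC⟩ := hKc.exists_bound_of_continuousOn hfc.continuousOn
    have hp₀K : (p₀.1, p₀.2) ∈ K := by
      refine ⟨Metric.mem_closedBall_self (by norm_num), ?_⟩
      simp only [mem_Icc]
      constructor
      · linarith [neg_abs_le p₀.2]
      · linarith [le_abs_self p₀.2]
    have hC0 : 0 ≤ C := le_trans (norm_nonneg _) (hC _ hp₀K)
    have hmem : ∀ p ∈ Metric.ball p₀ 1, ∀ s ∈ Ioc (0:ℝ) 1, (p.1, s * p.2) ∈ K := by
      intro p hp s hs
      rw [Metric.mem_ball, Prod.dist_eq] at hp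
      have h1 : dist p.1 p₀.1 < 1 := lt_of_le_of_lt (le_max_left _ _) hp
      have h2 : dist p.2 p₀.2 < 1 := lt_of_le_of_lt (le_max_right _ _) hp
      rw [Real.dist_eq] at h2
      have habs : |p.2| ≤ |p₀.2| + 1 := by
        have := abs_sub_abs_le_abs_sub p.2 p₀.2
        linarith
      have hsp : |s * p.2| ≤ |p₀.2| + 1 := by
        rw [abs_mul]
        have hs1 : |s| ≤ 1 := by
          rw [abs_le]; exact ⟨by linarith [hs.1.le], hs.2⟩
        calc |s| * |p.2| ≤ 1 * |p.2| :=
              mul_le_mul_of_nonneg_right hs1 (abs_nonneg _)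
          _ = |p.2| := one_mul _
          _ ≤ |p₀.2| + 1 := habs
      refine ⟨Metric.mem_closedBall.2 h1.le, ?_⟩
      rw [mem_Icc]
      have := abs_le.1 hsp
      exact ⟨this.1, this.2⟩
    have hLle : ∀ s ∈ Ioc (0:ℝ) 1, ∀ q : Euc (n+1) × ℝ, ‖L s q‖ ≤ ‖q‖ := by
      intro s hs q
      rw [hLapp, Prod.norm_def, Prod.norm_def]
      refine max_le_max le_rfl ?_
      rw [Real.norm_eq_abs, Real.norm_eq_abs, abs_mul]
      have hs1 : |s| ≤ 1 := by rw [abs_le]; exact ⟨by linarith [hs.1.le], hs.2⟩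
      calc |s| * |q.2| ≤ 1 * |q.2| := mul_le_mul_of_nonneg_right hs1 (abs_nonneg _)
        _ = |q.2| := one_mul _
    have key := hasFDerivAt_integral_of_dominated_of_fderiv_le
      (μ := volume.restrict (Ioc (0:ℝ) 1))
      (F := fun (p : Euc (n+1) × ℝ) (s : ℝ) => f (p.1, s * p.2))
      (F' := g') (x₀ := p₀) (bound := fun _ => C) (s := Metric.ball p₀ 1) (Metric.ball_mem_nhds p₀ one_pos)
      (Filter.Eventually.of_forall (fun p =>
        (hf.continuous.comp
          (continuous_const.prodMk (continuous_id'.mul continuous_const))).aestronglyMeasurable))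
      (hfsint p₀)
      ((hg'cont p₀).aestronglyMeasurable)
      ?_ ?_ ?_
    · exact key
    · refine (ae_restrict_mem measurableSet_Ioc).mono (fun s hs p hp => ?_)
      refine ContinuousLinearMap.opNorm_le_bound _ hC0 (fun q => ?_)
      have h1 : g' p s q = (fderiv ℝ f (p.1, s * p.2)) (L s q) := rfl
      rw [h1]
      calc ‖(fderiv ℝ f (p.1, s * p.2)) (L s q)‖
          ≤ ‖fderiv ℝ f (p.1, s * p.2)‖ * ‖L s q‖ := ContinuousLinearMap.le_opNorm _ _
        _ ≤ C * ‖q‖ := mul_le_mul (hC _ (hmem p hp s hs)) (hLle s hs q) (norm_nonneg _) hC0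
    · refine integrableOn_const (ne_of_lt ?_)
      rw [Real.volume_Ioc]
      exact ENNReal.ofReal_lt_top
    · exact Filter.Eventually.of_forall (fun s p _ => gdiff p s)
  set Φ : Euc (n+1) × ℝ → Euc (n+1) := fun p => p.2 • G p with hΦdef
  set Φ' : Euc (n+1) × ℝ → (Euc (n+1) × ℝ →L[ℝ] Euc (n+1)) := fun p =>
    p.2 • (∫ s in Ioc (0:ℝ) 1, g' p s) +
      (ContinuousLinearMap.snd ℝ (Euc (n+1)) ℝ).smulRight (G p) with hΦ'def
  have hΦ : ∀ p : Euc (n+1) × ℝ, HasFDerivAt Φ (Φ' p) p :=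
    fun p => (hasFDerivAt_snd).smul (hGdiff p)
  set w : Euc (n+1) → Euc (n+1) := fun x => Φ (x, u x) with hwdef
  set w' : Euc (n+1) → (Euc (n+1) →L[ℝ] Euc (n+1)) := fun x =>
    (Φ' (x, u x)).comp ((ContinuousLinearMap.id ℝ (Euc (n+1))).prod (fderiv ℝ u x)) with hw'def
  have hw : ∀ x : Euc (n+1), HasFDerivAt w (w' x) x :=
    fun x => by
      have hcomp := (hΦ (x, u x)).comp x ((hasFDerivAt_id x).prodMk (hup x))
      exact hcomp
  have hdivw : ∀ x : Euc (n+1),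
      (∑ i : Fin (n+1), w' x (EuclideanSpace.single i (1:ℝ)) i)
        = ⟪f (x, u x), gradient u x⟫ := by
    intro x
    set lam := u x with hlam
    set p : Euc (n+1) × ℝ := (x, lam) with hpdef
    set κ : Fin (n+1) → ℝ := fun i => fderiv ℝ u x (EuclideanSpace.single i (1:ℝ)) with hκ
    -- continuity helpers in s
    have hcA : Continuous fun s : ℝ => fderiv ℝ f (x, s * lam) :=
      hfc.comp (continuous_const.prodMk (continuous_id'.mul continuous_const))
    have hcf : ∀ i : Fin (n+1), Continuous fun s : ℝ => f (x, s * lam) i :=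
      fun i => (continuous_apply i).comp
        ((PiLp.continuous_ofLp (p := 2) (β := fun _ : Fin (n+1) => ℝ)).comp (hf.continuous.comp (continuous_const.prodMk (continuous_id'.mul continuous_const))))
    have hcD : ∀ (v : Euc (n+1) × ℝ) (i : Fin (n+1)),
        Continuous fun s : ℝ => (fderiv ℝ f (x, s * lam)) v i :=
      fun v i => (continuous_apply i).comp ((PiLp.continuous_ofLp (p := 2) (β := fun _ : Fin (n+1) => ℝ)).comp (hcA.clm_apply continuous_const))
    have hIoc : ∀ {h : ℝ → ℝ}, Continuous h → Integrable h (volume.restrict (Ioc (0:ℝ) 1)) :=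
      fun hc => (hc.continuousOn.integrableOn_compact isCompact_Icc).mono_set
        Ioc_subset_Icc_self
    -- gradient coordinates
    have hgradi : ∀ i : Fin (n+1), gradient u x i = κ i := by
      intro i
      have h1 : ⟪gradient u x, EuclideanSpace.single i (1:ℝ)⟫ = κ i := by
        rw [gradient]
        exact InnerProductSpace.toDual_symm_apply
      rw [← h1, real_inner_comm, EuclideanSpace.inner_single_left]
      simp
    have hinner : ⟪f p, gradient u x⟫ = ∑ i : Fin (n+1), κ i * f p i := by
      simp only [PiLp.inner_apply, RCLike.inner_apply, starRingEnd_apply, star_trivial]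
      exact Finset.sum_congr rfl fun i _ => by rw [hgradi i]
    -- step 1 : evaluate w' x coordinatewise
    have step1 : ∀ i : Fin (n+1), w' x (EuclideanSpace.single i (1:ℝ)) i
        = lam * ((∫ s in Ioc (0:ℝ) 1, g' p s) (EuclideanSpace.single i (1:ℝ), κ i)) i
          + κ i * (G p) i := by
      intro i
      have hws : w' x (EuclideanSpace.single i (1:ℝ))
          = Φ' p (EuclideanSpace.single i (1:ℝ), κ i) := by
        rw [hw'def]
        simp only [ContinuousLinearMap.comp_apply, ContinuousLinearMap.prod_apply,
          ContinuousLinearMap.id_apply]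
        rfl
      rw [hws, hΦ'def]
      simp only [ContinuousLinearMap.add_apply, ContinuousLinearMap.smul_apply,
        ContinuousLinearMap.smulRight_apply, ContinuousLinearMap.coe_snd']
      rw [PiLp.add_apply, PiLp.smul_apply, PiLp.smul_apply, smul_eq_mul, smul_eq_mul]
    -- step 2 : coordinate of the integral of operators
    have step2 : ∀ i : Fin (n+1),
        ((∫ s in Ioc (0:ℝ) 1, g' p s) (EuclideanSpace.single i (1:ℝ), κ i)) i
          = ∫ s in Ioc (0:ℝ) 1, (g' p s (EuclideanSpace.single i (1:ℝ), κ i)) i := by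
      intro i
      rw [ContinuousLinearMap.integral_apply (hg'int p)]
      exact ((EuclideanSpace.proj (𝕜 := ℝ) i).integral_comp_comm
        ((hg'int p).apply_continuousLinearMap _)).symm
    have stepG : ∀ i : Fin (n+1), (G p) i = ∫ s in Ioc (0:ℝ) 1, f (x, s * lam) i := by
      intro i
      exact ((EuclideanSpace.proj (𝕜 := ℝ) i).integral_comp_comm (hfsint p)).symm
    -- step 3 : pointwise decomposition of the integrand
    have step3 : ∀ (i : Fin (n+1)) (s : ℝ),
        (g' p s (EuclideanSpace.single i (1:ℝ), κ i)) i
          = (fderiv ℝ f (x, s * lam) (EuclideanSpace.single i (1:ℝ), 0)) i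
            + s * κ i * (fderiv ℝ f (x, s * lam) ((0 : Euc (n+1)), (1:ℝ))) i := by
      intro i s
      have h1 : g' p s (EuclideanSpace.single i (1:ℝ), κ i)
          = (fderiv ℝ f (x, s * lam)) (EuclideanSpace.single i (1:ℝ), s * κ i) := by
        rw [hg']
        simp only [ContinuousLinearMap.comp_apply]
        rw [hLapp]
      rw [h1]
      have h2 : ((EuclideanSpace.single i (1:ℝ) : Euc (n+1)), s * κ i)
          = (EuclideanSpace.single i (1:ℝ), (0:ℝ))
            + (s * κ i) • ((0 : Euc (n+1)), (1:ℝ)) := by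
        simp [Prod.ext_iff]
      rw [h2, map_add, _root_.map_smul]
      rw [PiLp.add_apply, PiLp.smul_apply, smul_eq_mul]
    -- FTC : the lam-direction part integrates to f p i
    have hFTC : ∀ i : Fin (n+1),
        (∫ s in Ioc (0:ℝ) 1, (f (x, s * lam) i
          + s * (lam * (fderiv ℝ f (x, s * lam) ((0 : Euc (n+1)), (1:ℝ))) i))) = f p i := by
      intro i
      have h1 : ∀ s : ℝ, HasDerivAt (fun t : ℝ => t * (f (x, t * lam) i))
          (f (x, s * lam) i
            + s * (lam * (fderiv ℝ f (x, s * lam) ((0 : Euc (n+1)), (1:ℝ))) i)) s := by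
        intro s
        have hin : HasDerivAt (fun t : ℝ => ((x, t * lam) : Euc (n+1) × ℝ))
            ((0 : Euc (n+1)), lam) s :=
          (hasDerivAt_const s x).prodMk (hasDerivAt_mul_const lam)
        have hcomp := (hfp (x, s * lam)).comp_hasDerivAt s hin
        have hproj := (EuclideanSpace.proj (𝕜 := ℝ) i).hasFDerivAt.comp_hasDerivAt s hcomp
        have heq : (EuclideanSpace.proj (𝕜 := ℝ) i)
              (fderiv ℝ f (x, s * lam) ((0 : Euc (n+1)), lam))
            = lam * (fderiv ℝ f (x, s * lam) ((0 : Euc (n+1)), (1:ℝ))) i := by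
          have h3 : ((0 : Euc (n+1)), lam) = lam • ((0 : Euc (n+1)), (1:ℝ)) := by
            simp [Prod.ext_iff]
          rw [h3, _root_.map_smul]
          show (lam • fderiv ℝ f (x, s * lam) ((0 : Euc (n+1)), (1:ℝ))) i = _
          rw [PiLp.smul_apply, smul_eq_mul]
        rw [heq] at hproj
        have hmul := (hasDerivAt_id s).mul hproj
        simp at hmul
        exact hmul
      rw [← intervalIntegral.integral_of_le (by norm_num : (0:ℝ) ≤ 1)]
      have hcont' : Continuous fun s : ℝ => f (x, s * lam) i
          + s * (lam * (fderiv ℝ f (x, s * lam) ((0 : Euc (n+1)), (1:ℝ))) i) :=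
        (hcf i).add (continuous_id'.mul (continuous_const.mul (hcD _ i)))
      have h2 := intervalIntegral.integral_eq_sub_of_hasDerivAt
        (f := fun t : ℝ => t * f (x, t * lam) i) (fun t _ => h1 t)
        (hcont'.intervalIntegrable 0 1)
      rw [h2]
      norm_num [hpdef]
    -- divergence-free part integrates to zero
    have hdivpart : (∫ s in Ioc (0:ℝ) 1, (∑ i : Fin (n+1),
        (fderiv ℝ f (x, s * lam) (EuclideanSpace.single i (1:ℝ), 0)) i)) = 0 := by
      have : ∀ s : ℝ, (∑ i : Fin (n+1),
          (fderiv ℝ f (x, s * lam) (EuclideanSpace.single i (1:ℝ), 0)) i) = 0 :=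
        fun s => hdiv' x (s * lam)
      simp only [this, integral_zero]
    -- assemble
    have assemble : ∀ i : Fin (n+1), w' x (EuclideanSpace.single i (1:ℝ)) i
        = lam * (∫ s in Ioc (0:ℝ) 1,
            (fderiv ℝ f (x, s * lam) (EuclideanSpace.single i (1:ℝ), 0)) i)
          + κ i * f p i := by
      intro i
      have e3 : ∀ s : ℝ, (g' p s (EuclideanSpace.single i (1:ℝ), κ i)) i
          = (fderiv ℝ f (x, s * lam) (EuclideanSpace.single i (1:ℝ), 0)) i
            + κ i * (s * (fderiv ℝ f (x, s * lam) ((0 : Euc (n+1)), (1:ℝ))) i) := by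
        intro s
        rw [step3 i s]
        ring
      have hsplit : (∫ s in Ioc (0:ℝ) 1, (g' p s (EuclideanSpace.single i (1:ℝ), κ i)) i)
          = (∫ s in Ioc (0:ℝ) 1,
              (fderiv ℝ f (x, s * lam) (EuclideanSpace.single i (1:ℝ), 0)) i)
            + κ i * (∫ s in Ioc (0:ℝ) 1,
              s * (fderiv ℝ f (x, s * lam) ((0 : Euc (n+1)), (1:ℝ))) i) := by
        rw [← integral_const_mul (κ i), ← integral_add (hIoc (hcD _ i))
          (hIoc (h := fun s => κ i * (s * (fderiv ℝ f (x, s * lam) ((0 : Euc (n+1)), (1:ℝ))) i)) (continuous_const.mul (continuous_id'.mul (hcD _ i))))]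
        exact integral_congr_ae (Filter.Eventually.of_forall e3)
      have hFTC2 : f p i = (∫ s in Ioc (0:ℝ) 1, f (x, s * lam) i)
          + lam * (∫ s in Ioc (0:ℝ) 1,
              s * (fderiv ℝ f (x, s * lam) ((0 : Euc (n+1)), (1:ℝ))) i) := by
        rw [← integral_const_mul lam, ← integral_add (hIoc (hcf i))
          (hIoc (h := fun s => lam * (s * (fderiv ℝ f (x, s * lam) ((0 : Euc (n+1)), (1:ℝ))) i)) (continuous_const.mul (continuous_id'.mul (hcD _ i)))), ← hFTC i]
        refine integral_congr_ae (Filter.Eventually.of_forall (fun s => ?_))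
        ring
      rw [step1 i, step2 i, stepG i, hsplit, hFTC2]
      ring
    rw [Finset.sum_congr rfl (fun i _ => assemble i)]
    rw [Finset.sum_add_distrib, ← Finset.mul_sum]
    rw [← integral_finset_sum _ (fun i _ => hIoc (hcD _ i)), hdivpart]
    rw [hinner]
    ring
  have hcont : Continuous (fun x : Euc (n+1) => ⟪f (x, u x), gradient u x⟫) := by
    have h1 : Continuous (fun x : Euc (n+1) => f (x, u x)) :=
      hf.continuous.comp (continuous_id.prodMk hu.continuous)
    have h2 : Continuous (fun x : Euc (n+1) => gradient u x) :=
      (InnerProductSpace.toDual ℝ (Euc (n+1))).symm.continuous.comp huc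
    exact h1.inner h2
  have hsupp2 : ∀ x : Euc (n+1), x ∉ tsupport u → ⟪f (x, u x), gradient u x⟫ = 0 := by
    intro x hx
    have : fderiv ℝ u x = 0 := by
      by_contra h
      exact hx (support_fderiv_subset ℝ (Function.mem_support.2 h) : x ∈ tsupport u)
    simp [gradient, this]
  have hint : Integrable (fun x : Euc (n+1) => ⟪f (x, u x), gradient u x⟫) :=
    (hcont.integrable_of_hasCompactSupport (HasCompactSupport.intro husupp hsupp2))
  obtain ⟨R, hR0, hRsupp⟩ : ∃ R : ℝ, 0 < R ∧ ∀ x : Euc (n+1), R < ‖x‖ → u x = 0 := by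
    obtain ⟨R, hR⟩ := husupp.isCompact.isBounded.subset_closedBall 0
    refine ⟨max R 1, lt_max_of_lt_right one_pos, fun x hx => ?_⟩
    by_contra h
    have h1 : x ∈ tsupport u := subset_tsupport u (Function.mem_support.2 h)
    have h2 := hR h1
    simp only [Metric.mem_closedBall, dist_zero_right] at h2
    have := le_max_left R 1
    linarith
  have hwsupp : ∀ x : Euc (n+1), R < ‖x‖ → w x = 0 := by
    intro x hx
    simp [hwdef, hΦdef, hRsupp x hx]
  -- transfer to the pi world
  set ι := EuclideanSpace.equiv (Fin (n+1)) ℝ with hιdef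
  set W : (Fin (n+1) → ℝ) → (Fin (n+1) → ℝ) := fun y => ι (w (ι.symm y)) with hWdef
  set W' : (Fin (n+1) → ℝ) → ((Fin (n+1) → ℝ) →L[ℝ] (Fin (n+1) → ℝ)) := fun y =>
    ((ι.toContinuousLinearMap.comp (w' (ι.symm y))).comp
      (ι.symm.toContinuousLinearMap)) with hW'def
  have hWd : ∀ y : Fin (n+1) → ℝ, HasFDerivAt W (W' y) y := by
    intro y
    exact ι.toContinuousLinearMap.hasFDerivAt.comp y
      ((hw (ι.symm y)).comp y ι.symm.toContinuousLinearMap.hasFDerivAt)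
  have hcoord : ∀ (x : Euc (n+1)) (i : Fin (n+1)), |x i| ≤ ‖x‖ := by
    intro x i
    have h1 := abs_real_inner_le_norm x (EuclideanSpace.single i (1:ℝ))
    rw [EuclideanSpace.inner_single_right, EuclideanSpace.norm_single] at h1
    simpa using h1
  have hWsupp : ∀ y : Fin (n+1) → ℝ, R < ‖y‖ → W y = 0 := by
    intro y hy
    have h1 : R < ‖ι.symm y‖ := by
      by_contra h
      push_neg at h
      have h2 : ‖y‖ ≤ R := by
        refine (pi_norm_le_iff_of_nonneg hR0.le).2 (fun i => ?_)
        have := (hcoord (ι.symm y) i).trans h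
        exact this
      linarith
    show ι (w (ι.symm y)) = 0
    rw [hwsupp _ h1]
    simp
  have hWdiv : ∀ y : Fin (n+1) → ℝ, (∑ i : Fin (n+1), W' y (Pi.single i 1) i)
      = ⟪f (ι.symm y, u (ι.symm y)), gradient u (ι.symm y)⟫ := by
    intro y
    rw [← hdivw (ι.symm y)]
    refine Finset.sum_congr rfl (fun i _ => ?_)
    rfl
  have hintW : Integrable (fun y : Fin (n+1) → ℝ => ∑ i : Fin (n+1), W' y (Pi.single i 1) i) := by
    have heqf : (fun y : Fin (n+1) → ℝ => ∑ i : Fin (n+1), W' y (Pi.single i 1) i)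
        = (fun x : Euc (n+1) => ⟪f (x, u x), gradient u x⟫)
          ∘ (MeasurableEquiv.toLp 2 (Fin (n+1) → ℝ)) := funext hWdiv
    rw [heqf]
    exact ((EuclideanSpace.volume_preserving_symm_measurableEquiv_toLp
      (Fin (n+1))).symm _ |>.integrable_comp_emb
      (MeasurableEquiv.measurableEmbedding _)).2 hint
  have hdivzero := div_int_zero W W' hWd R hR0 hWsupp hintW
  have hiceq : (∫ x : Euc (n+1), ⟪f (x, u x), gradient u x⟫)
      = ∫ y : Fin (n+1) → ℝ, ∑ i : Fin (n+1), W' y (Pi.single i 1) i := by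
    rw [← (EuclideanSpace.volume_preserving_symm_measurableEquiv_toLp
      (Fin (n+1))).symm _ |>.integral_comp (MeasurableEquiv.measurableEmbedding _)
      (fun x : Euc (n+1) => ⟪f (x, u x), gradient u x⟫)]
    exact integral_congr_ae (Filter.Eventually.of_forall (fun y => (hWdiv y).symm))
  rw [hiceq, hdivzero]


/-- If `f : ℝ^d × ℝ → ℝ^d` is `C¹` and divergence-free in `x` for every fixed `λ`
(geometry compatibility), and `u : ℝ^d → ℝ` is `C¹` with compact support, then
`∫_{ℝ^d} ⟨f(x,u(x)), ∇u(x)⟩ dx = 0`. -/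
theorem integral_inner_flux_gradient_eq_zero
    (d : ℕ)
    (f : EuclideanSpace ℝ (Fin d) × ℝ → EuclideanSpace ℝ (Fin d))
    (hf : ContDiff ℝ 1 f)
    (hdiv : ∀ (x : EuclideanSpace ℝ (Fin d)) (lam : ℝ),
      vdiv (fun y => f (y, lam)) x = 0)
    (u : EuclideanSpace ℝ (Fin d) → ℝ) (hu : ContDiff ℝ 1 u)
    (husupp : HasCompactSupport u) :
    ∫ x : EuclideanSpace ℝ (Fin d), ⟪f (x, u x), gradient u x⟫ = 0 := by
  obtain rfl | ⟨n, rfl⟩ : d = 0 ∨ ∃ n, d = n + 1 := by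
    cases d with
    | zero => exact Or.inl rfl
    | succ n => exact Or.inr ⟨n, rfl⟩
  · simp [PiLp.inner_apply]
    have hf0 : ∀ q, f q = 0 := fun q => by ext i; exact i.elim0
    simp [hf0]
  · refine aux_integral_flux n f hf ?_ u hu husupp
    intro x t
    have h0 := hdiv x t
    rw [vdiv] at h0
    have hkey : ∀ i : Fin (n+1),
        (fderiv ℝ f (x, t) (EuclideanSpace.single i (1:ℝ), 0)) i
          = (fderiv ℝ (fun y => f (y, t)) x (EuclideanSpace.single i (1:ℝ))) i := by
      intro i
      have hfp : HasFDerivAt f (fderiv ℝ f (x, t)) (x, t) :=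
        (hf.differentiable one_ne_zero (x, t)).hasFDerivAt
      have hin : HasFDerivAt
          (fun y : EuclideanSpace ℝ (Fin (n+1)) => ((y, t) : EuclideanSpace ℝ (Fin (n+1)) × ℝ))
          ((ContinuousLinearMap.id ℝ (EuclideanSpace ℝ (Fin (n+1)))).prod 0) x :=
        (hasFDerivAt_id x).prodMk (hasFDerivAt_const t x)
      have h2 := (hfp.comp x hin).fderiv
      rw [show (fun y : EuclideanSpace ℝ (Fin (n+1)) => f (y, t))
        = f ∘ (fun y : EuclideanSpace ℝ (Fin (n+1)) => (y, t)) from rfl, h2]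
      simp
    exact Eq.trans (Finset.sum_congr rfl (fun i _ => hkey i)) h0
end

section
/- (Kinetic flux identity.) Let d ∈ ℕ and let f : ℝ^d × ℝ → ℝ^d be twice continuously differentiable with Σ_{i=1}^d ∂_{x_i} f_i(x,λ) = 0 for all (x,λ). Let u : ℝ^d → ℝ be continuously differentiable and let ρ : ℝ → ℝ be continuously differentiable with compact support. Define the vector field Y : ℝ^d → ℝ^d by Y(x) := ∫_ℝ 1_{(−∞,u(x))}(λ) · ∂_λ f(x,λ) · ρ(λ) dλ. Then Y is differentiable and div Y(x) = ρ(u(x)) · div( y ↦ f(y,u(y)) )(x) for every x ∈ ℝ^d, where div( y ↦ f(y,u(y)) )(x) = Σ_{i=1}^d ∂_{x_i}[ f_i(·,u(·)) ](x) is the divergence of the composed vector field. -/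
set_option synthInstance.maxHeartbeats 1000000
set_option maxHeartbeats 1000000


open MeasureTheory RealInnerProductSpace

open intervalIntegral Set ContinuousLinearMap in
lemma hasFDerivAt_parametric_primitive
    {E F : Type*} [NormedAddCommGroup E] [NormedSpace ℝ E] [FiniteDimensional ℝ E]
    [NormedAddCommGroup F] [NormedSpace ℝ F] [CompleteSpace F]
    (h : E × ℝ → F) (hh : ContDiff ℝ 1 h) (a : ℝ) (x₀ : E) (t₀ : ℝ) :
    HasFDerivAt (fun p : E × ℝ => ∫ lam in a..p.2, h (p.1, lam))
      (((∫ lam in a..t₀, (fderiv ℝ h (x₀, lam)).comp (ContinuousLinearMap.inl ℝ E ℝ)).comp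
          (ContinuousLinearMap.fst ℝ E ℝ)) +
        (ContinuousLinearMap.snd ℝ E ℝ).smulRight (h (x₀, t₀))) (x₀, t₀) := by
  have hc : Continuous h := hh.continuous
  have hcd : Continuous (fderiv ℝ h) := hh.continuous_fderiv one_ne_zero
  have hdiffh : Differentiable ℝ h := hh.differentiable one_ne_zero
  have hcx : ∀ x : E, Continuous fun lam => h (x, lam) := fun x =>
    hc.comp (continuous_const.prodMk continuous_id)
  have hci : ∀ (x : E) (b c : ℝ), IntervalIntegrable (fun lam => h (x, lam)) volume b c :=
    fun x b c => (hcx x).intervalIntegrable b c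
  -- the parametric part
  have hK : IsCompact ((Metric.closedBall x₀ 1) ×ˢ (uIcc a t₀)) :=
    (isCompact_closedBall x₀ 1).prod isCompact_uIcc
  obtain ⟨M, hM⟩ : ∃ M, ∀ q ∈ (Metric.closedBall x₀ 1) ×ˢ (uIcc a t₀), ‖fderiv ℝ h q‖ ≤ M :=
    hK.exists_bound_of_continuousOn hcd.continuousOn
  have hM0 : 0 ≤ M :=
    le_trans (norm_nonneg _) (hM (x₀, a) ⟨Metric.mem_closedBall_self zero_le_one, left_mem_uIcc⟩)
  have hpart : ∀ (x : E) (lam : ℝ),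
      HasFDerivAt (fun y => h (y, lam)) ((fderiv ℝ h (x, lam)).comp (inl ℝ E ℝ)) x := by
    intro x lam
    exact (hdiffh (x, lam)).hasFDerivAt.comp x
      ((hasFDerivAt_id x).prodMk (hasFDerivAt_const lam x))
  have hF'cont : Continuous fun lam => (fderiv ℝ h (x₀, lam)).comp (inl ℝ E ℝ) :=
    (hcd.comp (continuous_const.prodMk continuous_id)).clm_comp continuous_const
  have g1 : HasFDerivAt (fun x : E => ∫ lam in a..t₀, h (x, lam))
      (∫ lam in a..t₀, (fderiv ℝ h (x₀, lam)).comp (inl ℝ E ℝ)) x₀ := by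
    apply intervalIntegral.hasFDerivAt_integral_of_dominated_of_fderiv_le
      (F' := fun (x : E) lam => (fderiv ℝ h (x, lam)).comp (inl ℝ E ℝ))
      (bound := fun _ => M) (s := Metric.ball x₀ 1) (Metric.ball_mem_nhds x₀ one_pos)
    · filter_upwards with x
      exact ((hcx x).aestronglyMeasurable).restrict
    · exact hci x₀ a t₀
    · exact (hF'cont.aestronglyMeasurable).restrict
    · filter_upwards with lam hlam x hx
      apply ContinuousLinearMap.opNorm_le_bound _ hM0
      intro v
      have hv : (fderiv ℝ h (x, lam)).comp (inl ℝ E ℝ) v = fderiv ℝ h (x, lam) (v, 0) := rfl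
      rw [hv]
      calc ‖fderiv ℝ h (x, lam) (v, 0)‖ ≤ ‖fderiv ℝ h (x, lam)‖ * ‖((v, (0 : ℝ)) : E × ℝ)‖ :=
            ContinuousLinearMap.le_opNorm _ _
        _ ≤ M * ‖v‖ := by
            have hnv : ‖((v, (0 : ℝ)) : E × ℝ)‖ = ‖v‖ := by
              rw [Prod.norm_def]
              simp [max_eq_left (norm_nonneg v)]
            rw [hnv]
            exact mul_le_mul_of_nonneg_right
              (hM _ ⟨Metric.ball_subset_closedBall hx, uIoc_subset_uIcc hlam⟩) (norm_nonneg v)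
    · exact intervalIntegrable_const
    · filter_upwards with lam hlam x hx
      exact hpart x lam
  -- the endpoint part
  have g2 : HasFDerivAt (fun p : E × ℝ => ∫ lam in t₀..p.2, h (p.1, lam))
      ((ContinuousLinearMap.snd ℝ E ℝ).smulRight (h (x₀, t₀))) (x₀, t₀) := by
    rw [hasFDerivAt_iff_isLittleO_nhds_zero, Asymptotics.isLittleO_iff]
    intro c hc0
    obtain ⟨δ, hδ0, hδ⟩ : ∃ δ > 0, ∀ q : E × ℝ, dist q (x₀, t₀) < δ →
        dist (h q) (h (x₀, t₀)) ≤ c := by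
      obtain ⟨δ, hδ0, hδ⟩ := Metric.continuousAt_iff.1 hc.continuousAt c hc0
      exact ⟨δ, hδ0, fun q hq => (hδ hq).le⟩
    filter_upwards [Metric.ball_mem_nhds (0 : E × ℝ) hδ0] with p hp
    have hpn : ‖p‖ < δ := by simpa [Metric.mem_ball] using hp
    have hfst : ((x₀, t₀) + p).1 = x₀ + p.1 := rfl
    have hsnd : ((x₀, t₀) + p).2 = t₀ + p.2 := rfl
    rw [hfst, hsnd]
    have e1 : (∫ lam in t₀..(x₀, t₀).2, h ((x₀, t₀).1, lam)) = 0 := intervalIntegral.integral_same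
    have e2 : ((ContinuousLinearMap.snd ℝ E ℝ).smulRight (h (x₀, t₀))) p
        = p.2 • h (x₀, t₀) := by simp
    rw [e1, e2, sub_zero]
    have e3 : (∫ lam in t₀..(t₀ + p.2), h (x₀ + p.1, lam)) - p.2 • h (x₀, t₀)
        = ∫ lam in t₀..(t₀ + p.2), (h (x₀ + p.1, lam) - h (x₀, t₀)) := by
      rw [intervalIntegral.integral_sub (hci _ _ _) intervalIntegrable_const,
        intervalIntegral.integral_const, add_sub_cancel_left]
    rw [e3]
    have bound : ∀ lam ∈ Set.uIoc t₀ (t₀ + p.2), ‖h (x₀ + p.1, lam) - h (x₀, t₀)‖ ≤ c := by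
      intro lam hlam
      have h1 : dist (x₀ + p.1) x₀ < δ := by
        rw [dist_eq_norm, add_sub_cancel_left]
        exact lt_of_le_of_lt (norm_fst_le p) hpn
      have h2 : dist lam t₀ ≤ ‖p‖ := by
        rw [Real.dist_eq]
        refine le_trans (abs_sub_left_of_mem_uIcc (uIoc_subset_uIcc hlam)) ?_
        rw [add_sub_cancel_left]
        exact norm_snd_le p
      have hq : dist ((x₀ + p.1, lam) : E × ℝ) (x₀, t₀) < δ := by
        rw [Prod.dist_eq]
        exact max_lt h1 (lt_of_le_of_lt h2 hpn)
      simpa [dist_eq_norm] using hδ _ hq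
    calc ‖∫ lam in t₀..(t₀ + p.2), (h (x₀ + p.1, lam) - h (x₀, t₀))‖
        ≤ c * |t₀ + p.2 - t₀| :=
        intervalIntegral.norm_integral_le_of_norm_le_const bound
      _ ≤ c * ‖p‖ := by
        apply mul_le_mul_of_nonneg_left _ hc0.le
        rw [add_sub_cancel_left]
        exact norm_snd_le p
  -- combine
  have hsplit : ∀ p : E × ℝ, (∫ lam in a..p.2, h (p.1, lam))
      = (∫ lam in a..t₀, h (p.1, lam)) + ∫ lam in t₀..p.2, h (p.1, lam) := fun p =>
    (intervalIntegral.integral_add_adjacent_intervals (hci _ _ _) (hci _ _ _)).symm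
  have hcomb := (g1.comp (x₀, t₀) (hasFDerivAt_fst (p := ((x₀, t₀) : E × ℝ)))).add g2
  exact hcomb.congr_of_eventuallyEq (Filter.Eventually.of_forall fun p => hsplit p)

/-- Kinetic flux identity: if `f : ℝ^d × ℝ → ℝ^d` is `C²` and divergence-free in `x`
for every fixed `λ` (geometry compatibility), `u : ℝ^d → ℝ` is `C¹`, and
`ρ : ℝ → ℝ` is `C¹` with compact support, then the vector field
`Y(x) = ∫_{(-∞, u(x))} ρ(λ) ∂_λ f(x,λ) dλ` is differentiable with
`div Y(x) = ρ(u(x)) · div(y ↦ f(y,u(y)))(x)`. -/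
theorem div_kinetic_flux
    (d : ℕ)
    (f : EuclideanSpace ℝ (Fin d) × ℝ → EuclideanSpace ℝ (Fin d))
    (hf : ContDiff ℝ 2 f)
    (hdiv : ∀ (x : EuclideanSpace ℝ (Fin d)) (lam : ℝ),
      vdiv (fun y => f (y, lam)) x = 0)
    (u : EuclideanSpace ℝ (Fin d) → ℝ) (hu : ContDiff ℝ 1 u)
    (ρ : ℝ → ℝ) (hρ : ContDiff ℝ 1 ρ) (hρsupp : HasCompactSupport ρ)
    (Y : EuclideanSpace ℝ (Fin d) → EuclideanSpace ℝ (Fin d))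
    (hY : ∀ x, Y x = ∫ lam in Set.Iio (u x), ρ lam • deriv (fun s => f (x, s)) lam) :
    ∀ x, DifferentiableAt ℝ Y x ∧
      vdiv Y x = ρ (u x) * vdiv (fun y => f (y, u y)) x := by
  have hfd : Differentiable ℝ f := hf.differentiable (by norm_num)
  have hB : ContDiff ℝ 1 (fderiv ℝ f) := hf.fderiv_right (le_refl _)
  have hBd : Differentiable ℝ (fderiv ℝ f) := hB.differentiable one_ne_zero
  set B := fderiv ℝ f with hBdef
  set e : Fin d → EuclideanSpace ℝ (Fin d) := fun i => EuclideanSpace.single i 1 with hedef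
  set h : (EuclideanSpace ℝ (Fin d)) × ℝ → EuclideanSpace ℝ (Fin d) :=
    fun p => ρ p.2 • (B p) (0, 1) with hhdef
  have hh : ContDiff ℝ 1 h := (hρ.comp contDiff_snd).smul (hB.clm_apply contDiff_const)
  have hderiv : ∀ (x : EuclideanSpace ℝ (Fin d)) (lam : ℝ),
      deriv (fun s => f (x, s)) lam = (B (x, lam)) (0, 1) := by
    intro x lam
    have : HasDerivAt (fun s => f (x, s)) ((B (x, lam)) (0, 1)) lam :=
      (hfd (x, lam)).hasFDerivAt.comp_hasDerivAt lam
        ((hasDerivAt_const lam x).prodMk (hasDerivAt_id lam))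
    exact this.deriv
  -- choice of the basepoint `a` below the support of `ρ`
  obtain ⟨r, hr⟩ := hρsupp.isBounded.subset_closedBall (0 : ℝ)
  set a : ℝ := -(|r| + 1) with hadef
  have hρ0 : ∀ lam ≤ a, ρ lam = 0 := by
    intro lam hlam
    apply image_eq_zero_of_notMem_tsupport
    intro hmem
    have h1 : |lam| ≤ r := by simpa [Real.dist_eq] using hr hmem
    have h2 : -|lam| ≤ lam := neg_abs_le lam
    have h3 : r ≤ |r| := le_abs_self r
    rw [hadef] at hlam
    linarith
  -- basic facts about `h`
  have hcont_hx : ∀ x, Continuous fun lam => h (x, lam) := fun x =>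
    hh.continuous.comp (continuous_const.prodMk continuous_id)
  have hsupp_hx : ∀ x, HasCompactSupport fun lam => h (x, lam) := fun x =>
    hρsupp.smul_right
  have hint : ∀ x, Integrable (fun lam => h (x, lam)) := fun x =>
    (hcont_hx x).integrable_of_hasCompactSupport (hsupp_hx x)
  -- rewriting `Y` as a parametric primitive
  have hYeq : ∀ x, Y x = ∫ lam in a..(u x), h (x, lam) := by
    intro x
    rw [hY x]
    have hIic0 : (∫ lam in Set.Iic a, h (x, lam)) = 0 := by
      apply setIntegral_eq_zero_of_forall_eq_zero
      intro lam hlam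
      simp [hhdef, hρ0 lam hlam]
    calc ∫ lam in Set.Iio (u x), ρ lam • deriv (fun s => f (x, s)) lam
        = ∫ lam in Set.Iio (u x), h (x, lam) := by
          apply setIntegral_congr_fun measurableSet_Iio
          intro lam _
          show ρ lam • deriv (fun s => f (x, s)) lam = h (x, lam)
          rw [hderiv x lam]
      _ = ∫ lam in Set.Iic (u x), h (x, lam) := setIntegral_congr_set Iio_ae_eq_Iic
      _ = (∫ lam in Set.Iic (u x), h (x, lam)) - ∫ lam in Set.Iic a, h (x, lam) := by
          rw [hIic0, sub_zero]
      _ = ∫ lam in a..(u x), h (x, lam) :=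
          intervalIntegral.integral_Iic_sub_Iic ((hint x).integrableOn) ((hint x).integrableOn)
  have hYf : Y = fun x => ∫ lam in a..(u x), h (x, lam) := funext hYeq
  intro x₀
  have hud : HasFDerivAt u (fderiv ℝ u x₀) x₀ := (hu.differentiable one_ne_zero x₀).hasFDerivAt
  set du := fderiv ℝ u x₀ with hdudef
  have hφ : HasFDerivAt (fun x : EuclideanSpace ℝ (Fin d) => ((x, u x) : _ × ℝ))
      ((ContinuousLinearMap.id ℝ _).prod du) x₀ := (hasFDerivAt_id x₀).prodMk hud
  have hg := hasFDerivAt_parametric_primitive h hh a x₀ (u x₀)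
  set A := ∫ lam in a..(u x₀), (fderiv ℝ h (x₀, lam)).comp (ContinuousLinearMap.inl ℝ (EuclideanSpace ℝ (Fin d)) ℝ) with hAdef
  have hYd : HasFDerivAt Y
      ((A.comp (ContinuousLinearMap.fst ℝ (EuclideanSpace ℝ (Fin d)) ℝ) +
        (ContinuousLinearMap.snd ℝ (EuclideanSpace ℝ (Fin d)) ℝ).smulRight (h (x₀, u x₀))).comp
        ((ContinuousLinearMap.id ℝ _).prod du)) x₀ := by
    have hc := hg.comp x₀ hφ
    have heq : Y =ᶠ[nhds x₀]
        ((fun p : (EuclideanSpace ℝ (Fin d)) × ℝ => ∫ lam in a..p.2, h (p.1, lam)) ∘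
          fun x => (x, u x)) := by
      filter_upwards with x
      rw [hYeq x]
      rfl
    exact hc.congr_of_eventuallyEq heq
  refine ⟨hYd.differentiableAt, ?_⟩
  -- compute the divergence
  have hfderY := hYd.fderiv
  -- continuity of the integrand family
  have hcd : Continuous (fderiv ℝ h) := hh.continuous_fderiv one_ne_zero
  have hDcont : Continuous fun lam => (fderiv ℝ h (x₀, lam)).comp
      (ContinuousLinearMap.inl ℝ (EuclideanSpace ℝ (Fin d)) ℝ) :=
    (hcd.comp (continuous_const.prodMk continuous_id)).clm_comp continuous_const
  have hII : IntervalIntegrable (fun lam => (fderiv ℝ h (x₀, lam)).comp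
      (ContinuousLinearMap.inl ℝ (EuclideanSpace ℝ (Fin d)) ℝ)) volume a (u x₀) :=
    hDcont.intervalIntegrable _ _
  have hIcont : ∀ i, Continuous fun lam => fderiv ℝ h (x₀, lam) (e i, (0 : ℝ)) := by
    intro i
    exact (hcd.comp (continuous_const.prodMk continuous_id)).clm_apply continuous_const
  -- divergence of the slice map
  have hfder_slice : ∀ (x : EuclideanSpace ℝ (Fin d)) (lam : ℝ),
      fderiv ℝ (fun y => f (y, lam)) x
        = (B (x, lam)).comp (ContinuousLinearMap.inl ℝ (EuclideanSpace ℝ (Fin d)) ℝ) := by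
    intro x lam
    exact ((hfd (x, lam)).hasFDerivAt.comp x
      ((hasFDerivAt_id x).prodMk (hasFDerivAt_const lam x))).fderiv
  -- the divergence-free hypothesis, restated
  have hpsi0 : ∀ q : (EuclideanSpace ℝ (Fin d)) × ℝ,
      (∑ i, ((B q) (e i, (0 : ℝ))) i) = 0 := by
    intro q
    have hq := hdiv q.1 q.2
    unfold vdiv at hq
    refine Eq.trans ?_ hq
    refine Finset.sum_congr rfl fun i _ => ?_
    rw [hfder_slice q.1 q.2]
    rfl
  -- full derivative of h
  have hDh : ∀ q : (EuclideanSpace ℝ (Fin d)) × ℝ, HasFDerivAt h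
      (ρ q.2 • ((B q).comp (0 : ((EuclideanSpace ℝ (Fin d)) × ℝ) →L[ℝ] _)
          + (fderiv ℝ B q).flip ((0 : EuclideanSpace ℝ (Fin d)), (1 : ℝ)))
        + ((deriv ρ q.2) • (ContinuousLinearMap.snd ℝ (EuclideanSpace ℝ (Fin d)) ℝ)).smulRight
            ((B q) (0, 1))) q := by
    intro q
    have hc' : HasFDerivAt (fun p : (EuclideanSpace ℝ (Fin d)) × ℝ => ρ p.2)
        ((deriv ρ q.2) • ContinuousLinearMap.snd ℝ (EuclideanSpace ℝ (Fin d)) ℝ) q :=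
      ((hρ.differentiable one_ne_zero q.2).hasDerivAt).comp_hasFDerivAt q hasFDerivAt_snd
    have hv : HasFDerivAt (fun p : (EuclideanSpace ℝ (Fin d)) × ℝ => (B p) (0, 1))
        ((B q).comp (0 : ((EuclideanSpace ℝ (Fin d)) × ℝ) →L[ℝ] _)
          + (fderiv ℝ B q).flip ((0 : EuclideanSpace ℝ (Fin d)), (1 : ℝ))) q :=
      ((hBd q).hasFDerivAt).clm_apply (hasFDerivAt_const _ _)
    exact hc'.smul hv
  -- key vanishing claim: ∑ i, (∂ₓ h)ᵢᵢ = 0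
  have claim0 : ∀ lam : ℝ, (∑ i, (fderiv ℝ h (x₀, lam) (e i, (0 : ℝ))) i) = 0 := by
    intro lam
    set q : (EuclideanSpace ℝ (Fin d)) × ℝ := (x₀, lam) with hqdef
    have hfh := (hDh q).fderiv
    have hstep1 : ∀ i, fderiv ℝ h q (e i, (0 : ℝ))
        = ρ lam • ((fderiv ℝ B q) (e i, (0 : ℝ))) ((0 : EuclideanSpace ℝ (Fin d)), (1 : ℝ)) := by
      intro i
      rw [hfh]
      simp [ContinuousLinearMap.add_apply, ContinuousLinearMap.smul_apply,
        ContinuousLinearMap.comp_apply, ContinuousLinearMap.flip_apply,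
        ContinuousLinearMap.smulRight_apply, ContinuousLinearMap.zero_apply]
      rfl
    have hsymm : ∀ i, ((fderiv ℝ B q) (e i, (0 : ℝ))) ((0 : EuclideanSpace ℝ (Fin d)), (1 : ℝ))
        = ((fderiv ℝ B q) ((0 : EuclideanSpace ℝ (Fin d)), (1 : ℝ))) (e i, (0 : ℝ)) := by
      intro i
      exact second_derivative_symmetric (fun y => (hfd y).hasFDerivAt)
        ((hBd q).hasFDerivAt) _ _
    -- derivative of the (identically zero) divergence function
    have hpsid : HasFDerivAt (fun p : (EuclideanSpace ℝ (Fin d)) × ℝ => ∑ i, ((B p) (e i, (0 : ℝ))) i)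
        (∑ i, (EuclideanSpace.proj i).comp
          ((B q).comp (0 : ((EuclideanSpace ℝ (Fin d)) × ℝ) →L[ℝ] _)
            + (fderiv ℝ B q).flip (e i, (0 : ℝ)))) q := by
      apply HasFDerivAt.fun_sum
      intro i _
      have h1 : HasFDerivAt (fun p : (EuclideanSpace ℝ (Fin d)) × ℝ => (B p) (e i, (0 : ℝ)))
          ((B q).comp (0 : ((EuclideanSpace ℝ (Fin d)) × ℝ) →L[ℝ] _)
            + (fderiv ℝ B q).flip (e i, (0 : ℝ))) q :=
        ((hBd q).hasFDerivAt).clm_apply (hasFDerivAt_const _ _)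
      exact (EuclideanSpace.proj i).hasFDerivAt.comp q h1
    have hzero : HasFDerivAt (fun p : (EuclideanSpace ℝ (Fin d)) × ℝ => ∑ i, ((B p) (e i, (0 : ℝ))) i)
        (0 : ((EuclideanSpace ℝ (Fin d)) × ℝ) →L[ℝ] ℝ) q :=
      (hasFDerivAt_const (0 : ℝ) q).congr_of_eventuallyEq
        (Filter.Eventually.of_forall hpsi0)
    have hun := hpsid.unique hzero
    have happ := congrArg (fun (L : ((EuclideanSpace ℝ (Fin d)) × ℝ) →L[ℝ] ℝ) =>
      L ((0 : EuclideanSpace ℝ (Fin d)), (1 : ℝ))) hun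
    simp only [ContinuousLinearMap.coe_sum', Finset.sum_apply,
      ContinuousLinearMap.comp_apply, ContinuousLinearMap.add_apply,
      ContinuousLinearMap.flip_apply, ContinuousLinearMap.zero_apply, map_zero,
      zero_add] at happ
    -- happ : ∑ i, proj i ((fderiv B q (0,1)) (e i, 0)) = 0
    calc (∑ i, (fderiv ℝ h (x₀, lam) (e i, (0 : ℝ))) i)
        = ∑ i, ρ lam * (((fderiv ℝ B q) ((0 : EuclideanSpace ℝ (Fin d)), (1 : ℝ))) (e i, (0 : ℝ))) i := by
          refine Finset.sum_congr rfl fun i _ => ?_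
          rw [show fderiv ℝ h (x₀, lam) = fderiv ℝ h q from rfl, hstep1 i, hsymm i]
          simp [smul_eq_mul]
      _ = ρ lam * ∑ i, (((fderiv ℝ B q) ((0 : EuclideanSpace ℝ (Fin d)), (1 : ℝ))) (e i, (0 : ℝ))) i :=
          (Finset.mul_sum _ _ _).symm
      _ = 0 := by
          rw [show (∑ i, (((fderiv ℝ B q) ((0 : EuclideanSpace ℝ (Fin d)), (1 : ℝ))) (e i, (0 : ℝ))) i) = 0 from happ]
          ring
  -- fderiv of the composed map y ↦ f (y, u y)
  have hfder_comp : fderiv ℝ (fun y => f (y, u y)) x₀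
      = (B (x₀, u x₀)).comp ((ContinuousLinearMap.id ℝ _).prod du) :=
    ((hfd (x₀, u x₀)).hasFDerivAt.comp x₀ hφ).fderiv
  -- the first term of the divergence vanishes
  have term1 : (∑ i, (A (e i)) i) = 0 := by
    have happly : ∀ i, A (e i) = ∫ lam in a..(u x₀), fderiv ℝ h (x₀, lam) (e i, (0 : ℝ)) := by
      intro i
      rw [hAdef, ContinuousLinearMap.intervalIntegral_apply hII (e i)]
      rfl
    have hcomp_i : ∀ i, (A (e i)) i
        = ∫ lam in a..(u x₀), (fderiv ℝ h (x₀, lam) (e i, (0 : ℝ))) i := by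
      intro i
      rw [happly i]
      exact ((EuclideanSpace.proj i).intervalIntegral_comp_comm
        ((hIcont i).intervalIntegrable (μ := volume) _ _)).symm
    calc (∑ i, (A (e i)) i)
        = ∑ i, ∫ lam in a..(u x₀), (fderiv ℝ h (x₀, lam) (e i, (0 : ℝ))) i := by
          exact Finset.sum_congr rfl fun i _ => hcomp_i i
      _ = ∫ lam in a..(u x₀), ∑ i, (fderiv ℝ h (x₀, lam) (e i, (0 : ℝ))) i := by
          exact (intervalIntegral.integral_finset_sum (fun i _ =>
            (((EuclideanSpace.proj i).continuous.comp (hIcont i)).intervalIntegrable _ _))).symm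
      _ = 0 := by simp [claim0]
  -- splitting of direction vectors
  have hsplit_vec : ∀ i : Fin d, ((B (x₀, u x₀)) (e i, du (e i)))
      = (B (x₀, u x₀)) (e i, (0 : ℝ))
        + du (e i) • (B (x₀, u x₀)) ((0 : EuclideanSpace ℝ (Fin d)), (1 : ℝ)) := by
    intro i
    rw [← _root_.map_smul, ← _root_.map_add]
    congr 1
    rw [Prod.ext_iff]
    constructor
    · simp
    · simp
  -- the divergence of the composed map
  have hRHS : vdiv (fun y => f (y, u y)) x₀
      = ∑ i, du (e i) * ((B (x₀, u x₀)) ((0 : EuclideanSpace ℝ (Fin d)), (1 : ℝ))) i := by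
    unfold vdiv
    calc ∑ i, (fderiv ℝ (fun y => f (y, u y)) x₀) (EuclideanSpace.single i 1) i
        = ∑ i, (((B (x₀, u x₀)) (e i, (0 : ℝ))) i
            + du (e i) * ((B (x₀, u x₀)) ((0 : EuclideanSpace ℝ (Fin d)), (1 : ℝ))) i) := by
          refine Finset.sum_congr rfl fun i _ => ?_
          rw [hfder_comp]
          have h1 : ((B (x₀, u x₀)).comp ((ContinuousLinearMap.id ℝ _).prod du))
              (EuclideanSpace.single i 1) = (B (x₀, u x₀)) (e i, du (e i)) := rfl
          rw [h1, hsplit_vec i]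
          simp [smul_eq_mul]
      _ = (∑ i, ((B (x₀, u x₀)) (e i, (0 : ℝ))) i)
            + ∑ i, du (e i) * ((B (x₀, u x₀)) ((0 : EuclideanSpace ℝ (Fin d)), (1 : ℝ))) i :=
          Finset.sum_add_distrib
      _ = ∑ i, du (e i) * ((B (x₀, u x₀)) ((0 : EuclideanSpace ℝ (Fin d)), (1 : ℝ))) i := by
          rw [hpsi0 (x₀, u x₀), zero_add]
  -- conclude
  rw [hRHS]
  unfold vdiv
  calc ∑ i, (fderiv ℝ Y x₀) (EuclideanSpace.single i 1) i
      = ∑ i, ((A (e i)) i + du (e i) * (h (x₀, u x₀)) i) := by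
        refine Finset.sum_congr rfl fun i _ => ?_
        rw [hfderY]
        have h1 : ((A.comp (ContinuousLinearMap.fst ℝ (EuclideanSpace ℝ (Fin d)) ℝ) +
            (ContinuousLinearMap.snd ℝ (EuclideanSpace ℝ (Fin d)) ℝ).smulRight (h (x₀, u x₀))).comp
            ((ContinuousLinearMap.id ℝ _).prod du)) (EuclideanSpace.single i 1)
            = A (e i) + du (e i) • h (x₀, u x₀) := by
          simp [ContinuousLinearMap.comp_apply, ContinuousLinearMap.add_apply,
            ContinuousLinearMap.smulRight_apply]
          rfl
        rw [h1]
        simp [smul_eq_mul]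
    _ = (∑ i, (A (e i)) i) + ∑ i, du (e i) * (h (x₀, u x₀)) i := Finset.sum_add_distrib
    _ = ∑ i, du (e i) * (h (x₀, u x₀)) i := by rw [term1, zero_add]
    _ = ρ (u x₀) * ∑ i, du (e i) * ((B (x₀, u x₀)) ((0 : EuclideanSpace ℝ (Fin d)), (1 : ℝ))) i := by
        rw [Finset.mul_sum]
        refine Finset.sum_congr rfl fun i _ => ?_
        have h2 : (h (x₀, u x₀)) i
            = ρ (u x₀) * ((B (x₀, u x₀)) ((0 : EuclideanSpace ℝ (Fin d)), (1 : ℝ))) i := by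
          show (ρ (u x₀) • (B (x₀, u x₀)) ((0 : EuclideanSpace ℝ (Fin d)), (1 : ℝ))) i = _
          simp [smul_eq_mul]
        rw [h2]
        ring
end

section
/- (Sign-function representation.) Let (X,Σ,μ) be a σ-finite measure space and let h : X × ℝ → ℝ be (Σ ⊗ Borel)-measurable. Define s : ℝ → ℝ by s(λ) = 1 for λ < 0 and s(λ) = −1 for λ ≥ 0. Assume that for μ-almost every x ∈ X: (i) |h(x,λ)| = 1 for Lebesgue-almost every λ; (ii) λ ↦ h(x,λ) is almost-everywhere nonincreasing, i.e., h(x,λ₁) ≥ h(x,λ₂) for Lebesgue-almost every pair λ₁ < λ₂; and (iii) λ ↦ h(x,λ) − s(λ) is Lebesgue integrable on ℝ. Then the function u : X → ℝ given by u(x) := (1/2) ∫_ℝ ( h(x,λ) − s(λ) ) dλ is measurable, and h(x,λ) = sgn( u(x) − λ ) for (μ ⊗ Lebesgue)-almost every (x,λ) ∈ X × ℝ, where sgn(r) = 1 for r > 0 and sgn(r) = −1 for r < 0 (the value at r = 0 being immaterial on a null set). -/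
open MeasureTheory Set

lemma sign_key (g : ℝ → ℝ) (hg : Measurable g)
    (s : ℝ → ℝ) (hs : ∀ lam : ℝ, s lam = if lam < 0 then 1 else -1)
    (h1 : ∀ᵐ lam ∂(volume : Measure ℝ), |g lam| = 1)
    (h2 : ∀ᵐ p ∂(volume : Measure (ℝ × ℝ)), p.1 < p.2 → g p.2 ≤ g p.1)
    (h3 : Integrable (fun lam => g lam - s lam)) :
    ∀ᵐ lam ∂(volume : Measure ℝ),
      g lam = if 0 < (1 / 2 : ℝ) * (∫ t : ℝ, (g t - s t)) - lam then 1 else -1 := by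
  set A : Set ℝ := g ⁻¹' {1} with hA
  set B : Set ℝ := g ⁻¹' {-1} with hB
  have hAm : MeasurableSet A := hg (measurableSet_singleton 1)
  have hBm : MeasurableSet B := hg (measurableSet_singleton (-1))
  have hAB : ∀ᵐ lam ∂(volume : Measure ℝ), lam ∈ A ∪ B := by
    filter_upwards [h1] with lam hl
    rcases (abs_eq (by norm_num : (0:ℝ) ≤ 1)).mp hl with h | h
    · exact Or.inl h
    · exact Or.inr h
  -- pair condition
  have h2' : (volume.prod volume) {p : ℝ × ℝ | ¬ (p.1 < p.2 → g p.2 ≤ g p.1)} = 0 :=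
    ae_iff.mp h2
  have hpair : (volume.prod volume) ((B ×ˢ A) ∩ {p : ℝ × ℝ | p.1 < p.2}) = 0 := by
    refine measure_mono_null ?_ h2'
    rintro ⟨a, b⟩ ⟨⟨ha, hb⟩, hlt⟩
    have ha' : g a = -1 := ha
    have hb' : g b = 1 := hb
    simp only [Set.mem_setOf_eq] at hlt ⊢
    push_neg
    exact ⟨hlt, by rw [ha', hb']; norm_num⟩
  have hmS : MeasurableSet ((B ×ˢ A) ∩ {p : ℝ × ℝ | p.1 < p.2}) :=
    (hBm.prod hAm).inter (measurableSet_lt measurable_fst measurable_snd)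
  have hslice : ∀ᵐ a ∂(volume : Measure ℝ), a ∈ B → volume (A ∩ Ioi a) = 0 := by
    have := (Measure.measure_prod_null hmS).mp hpair
    filter_upwards [this] with a ha haB
    have hset : Prod.mk a ⁻¹' ((B ×ˢ A) ∩ {p : ℝ × ℝ | p.1 < p.2}) = A ∩ Ioi a := by
      ext b
      simp only [Set.mem_preimage, Set.mem_inter_iff, Set.mem_prod, Set.mem_setOf_eq,
        Set.mem_Ioi]
      tauto
    simpa [hset] using ha
  -- finiteness
  have h2le : volume {lam : ℝ | (2:ℝ) ≤ ‖g lam - s lam‖} < ⊤ :=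
    h3.measure_norm_ge_lt_top (by norm_num)
  have hsub : (A ∩ Ioi 0) ∪ (B ∩ Iio 0) ⊆ {lam : ℝ | (2:ℝ) ≤ ‖g lam - s lam‖} := by
    rintro lam (⟨hA1, hpos⟩ | ⟨hB1, hneg⟩)
    · have hg1 : g lam = 1 := hA1
      have hl : ¬ (lam < 0) := not_lt.mpr (le_of_lt hpos)
      simp only [Set.mem_setOf_eq, hg1, hs lam, if_neg hl]
      norm_num
    · have hg1 : g lam = -1 := hB1
      simp only [Set.mem_setOf_eq, hg1, hs lam, if_pos (Set.mem_Iio.mp hneg)]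
      norm_num
  have hAfin : volume (A ∩ Ioi 0) < ⊤ :=
    lt_of_le_of_lt (measure_mono (subset_trans Set.subset_union_left hsub)) h2le
  have hBfin : volume (B ∩ Iio 0) < ⊤ :=
    lt_of_le_of_lt (measure_mono (subset_trans Set.subset_union_right hsub)) h2le
  -- the cutoff set
  set S : Set ℝ := {t | volume (A ∩ Ioi t) = 0} with hSdef
  have hSup : ∀ {t t' : ℝ}, t ∈ S → t ≤ t' → t' ∈ S := by
    intro t t' ht htt'
    exact measure_mono_null (Set.inter_subset_inter_right _ (Set.Ioi_subset_Ioi htt')) ht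
  have hSne : S.Nonempty := by
    by_contra hemp
    have hBnull : volume B = 0 := by
      rw [measure_eq_zero_iff_ae_notMem]
      filter_upwards [hslice] with a ha haB
      exact hemp ⟨a, ha haB⟩
    have hAcnull : volume Aᶜ = 0 := by
      rw [measure_eq_zero_iff_ae_notMem]
      have hBn : ∀ᵐ a ∂(volume : Measure ℝ), a ∉ B := measure_eq_zero_iff_ae_notMem.mp hBnull
      filter_upwards [hAB, hBn] with a hab hnb
      simpa using hab.resolve_right hnb
    have hle : (volume : Measure ℝ) (Ioi (0:ℝ)) ≤ volume ((A ∩ Ioi 0) ∪ Aᶜ) := by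
      refine measure_mono ?_
      intro x hx
      by_cases hxA : x ∈ A
      · exact Or.inl ⟨hxA, hx⟩
      · exact Or.inr hxA
    have hle2 := le_trans hle (measure_union_le _ _)
    rw [hAcnull, add_zero, Real.volume_Ioi] at hle2
    exact lt_irrefl _ (lt_of_le_of_lt hle2 hAfin)
  have hSbdd : BddBelow S := by
    by_contra hbd
    rw [not_bddBelow_iff] at hbd
    have hAll : ∀ t : ℝ, t ∈ S := by
      intro t
      obtain ⟨y, hyS, hyt⟩ := hbd t
      exact hSup hyS hyt.le
    have hAnull : volume A = 0 := by
      have hsubA : A ⊆ ⋃ n : ℕ, A ∩ Ioi (-(n:ℝ)) := by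
        intro x hx
        obtain ⟨n, hn⟩ := exists_nat_gt (-x)
        exact Set.mem_iUnion.mpr ⟨n, hx, by simp [Set.mem_Ioi]; linarith⟩
      exact measure_mono_null hsubA (measure_iUnion_null fun n => hAll _)
    have hBc : volume Bᶜ = 0 := by
      rw [measure_eq_zero_iff_ae_notMem]
      have hAn : ∀ᵐ a ∂(volume : Measure ℝ), a ∉ A := measure_eq_zero_iff_ae_notMem.mp hAnull
      filter_upwards [hAB, hAn] with a hab hna
      simpa using hab.resolve_left hna
    have hle : (volume : Measure ℝ) (Iio (0:ℝ)) ≤ volume ((B ∩ Iio 0) ∪ Bᶜ) := by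
      refine measure_mono ?_
      intro x hx
      by_cases hxB : x ∈ B
      · exact Or.inl ⟨hxB, hx⟩
      · exact Or.inr hxB
    have hle2 := le_trans hle (measure_union_le _ _)
    rw [hBc, add_zero, Real.volume_Iio] at hle2
    exact lt_irrefl _ (lt_of_le_of_lt hle2 hBfin)
  set c := sInf S with hcdef
  have hmemS : ∀ t : ℝ, c < t → t ∈ S := by
    intro t ht
    obtain ⟨y, hyS, hyt⟩ := (csInf_lt_iff hSbdd hSne).mp ht
    exact hSup hyS hyt.le
  have hAIoi : volume (A ∩ Ioi c) = 0 := by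
    have hsubA : A ∩ Ioi c ⊆ ⋃ n : ℕ, A ∩ Ioi (c + 1/((n:ℝ)+1)) := by
      rintro x ⟨hxA, hxc⟩
      obtain ⟨n, hn⟩ := exists_nat_one_div_lt (sub_pos.mpr (Set.mem_Ioi.mp hxc))
      exact Set.mem_iUnion.mpr ⟨n, hxA, by simp only [Set.mem_Ioi]; linarith⟩
    refine measure_mono_null hsubA (measure_iUnion_null fun n => hmemS _ ?_)
    have hp : (0:ℝ) < 1/((n:ℝ)+1) := by positivity
    linarith
  have hBIio : volume (B ∩ Iio c) = 0 := by
    rw [measure_eq_zero_iff_ae_notMem]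
    filter_upwards [hslice] with a ha
    rintro ⟨haB, halt⟩
    exact absurd (csInf_le hSbdd (ha haB)) (not_le.mpr (Set.mem_Iio.mp halt))
  -- a.e. description of g
  have hmain : ∀ᵐ lam ∂(volume : Measure ℝ), g lam = if lam < c then 1 else -1 := by
    have hA' : ∀ᵐ lam ∂(volume : Measure ℝ), lam ∉ A ∩ Ioi c :=
      measure_eq_zero_iff_ae_notMem.mp hAIoi
    have hB' : ∀ᵐ lam ∂(volume : Measure ℝ), lam ∉ B ∩ Iio c :=
      measure_eq_zero_iff_ae_notMem.mp hBIio
    have hc' : ∀ᵐ lam ∂(volume : Measure ℝ), lam ≠ c := by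
      rw [ae_iff]
      have : {lam : ℝ | ¬ lam ≠ c} = {c} := by ext t; simp
      rw [this]
      exact Real.volume_singleton
    filter_upwards [hAB, hA', hB', hc'] with lam hab hna hnb hnc
    rcases lt_or_gt_of_ne hnc with hlt | hgt
    · rw [if_pos hlt]
      rcases hab with hm | hm
      · exact hm
      · exact absurd ⟨hm, hlt⟩ hnb
    · rw [if_neg (not_lt.mpr hgt.le)]
      rcases hab with hm | hm
      · exact absurd ⟨hm, hgt⟩ hna
      · exact hm
  -- compute the integral
  have hint : (∫ t : ℝ, (g t - s t)) = 2 * c := by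
    have heq : (fun t => g t - s t) =ᵐ[(volume : Measure ℝ)]
        (fun t => (if t < c then (1:ℝ) else -1) - s t) := by
      filter_upwards [hmain] with t ht
      rw [ht]
    rw [integral_congr_ae heq]
    rcases le_or_gt 0 c with hc0 | hc0
    · have hfun : (fun t => (if t < c then (1:ℝ) else -1) - s t)
          = Set.indicator (Set.Ico 0 c) (fun _ => (2:ℝ)) := by
        funext t
        rw [hs t]
        by_cases ht0 : t < 0
        · rw [if_pos (lt_of_lt_of_le ht0 hc0), if_pos ht0,
            Set.indicator_of_notMem (fun hmem => absurd hmem.1 (not_le.mpr ht0))]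
          ring
        · push_neg at ht0
          by_cases htc : t < c
          · rw [if_pos htc, if_neg (not_lt.mpr ht0), Set.indicator_of_mem (Set.mem_Ico.mpr ⟨ht0, htc⟩)]
            norm_num
          · rw [if_neg htc, if_neg (not_lt.mpr ht0),
              Set.indicator_of_notMem (fun hmem => htc hmem.2)]
            ring
      rw [hfun, integral_indicator_const _ measurableSet_Ico, measureReal_def, Real.volume_Ico, smul_eq_mul,
        ENNReal.toReal_ofReal (by linarith)]
      ring
    · have hfun : (fun t => (if t < c then (1:ℝ) else -1) - s t)
          = Set.indicator (Set.Ico c 0) (fun _ => (-2:ℝ)) := by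
        funext t
        rw [hs t]
        by_cases htc : t < c
        · rw [if_pos htc, if_pos (lt_trans htc hc0),
            Set.indicator_of_notMem (fun hmem => absurd hmem.1 (not_le.mpr htc))]
          ring
        · push_neg at htc
          by_cases ht0 : t < 0
          · rw [if_neg (not_lt.mpr htc), if_pos ht0, Set.indicator_of_mem (Set.mem_Ico.mpr ⟨htc, ht0⟩)]
            norm_num
          · rw [if_neg (not_lt.mpr htc), if_neg ht0,
              Set.indicator_of_notMem (fun hmem => ht0 hmem.2)]
            ring
      rw [hfun, integral_indicator_const _ measurableSet_Ico, measureReal_def, Real.volume_Ico, smul_eq_mul,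
        ENNReal.toReal_ofReal (by linarith)]
      ring
  have hval : (1 / 2 : ℝ) * (∫ t : ℝ, (g t - s t)) = c := by rw [hint]; ring
  filter_upwards [hmain] with lam hl
  rw [hval, hl]
  simp [sub_pos]

/-- Sign-function representation: if `h : X × ℝ → ℝ` takes a.e. values in `{-1,1}`, is a.e.
nonincreasing in the velocity variable `λ`, and `λ ↦ h(x,λ) - s(λ)` is integrable (where
`s(λ) = 1` for `λ < 0` and `s(λ) = -1` for `λ ≥ 0`), then
`u(x) := (1/2)∫_ℝ (h(x,λ) - s(λ)) dλ` is measurable and `h(x,λ) = sgn(u(x) - λ)`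
almost everywhere. -/
theorem sign_function_representation
    {X : Type*} [MeasurableSpace X] (μ : Measure X) [SigmaFinite μ]
    (h : X → ℝ → ℝ) (hmeas : Measurable (Function.uncurry h))
    (s : ℝ → ℝ) (hs : ∀ lam : ℝ, s lam = if lam < 0 then 1 else -1)
    (hae : ∀ᵐ x ∂μ,
      (∀ᵐ lam ∂(volume : Measure ℝ), |h x lam| = 1) ∧
      (∀ᵐ p ∂(volume : Measure (ℝ × ℝ)), p.1 < p.2 → h x p.2 ≤ h x p.1) ∧
      Integrable (fun lam => h x lam - s lam)) :
    Measurable (fun x => (1 / 2 : ℝ) * ∫ lam : ℝ, (h x lam - s lam)) ∧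
    ∀ᵐ q ∂(μ.prod (volume : Measure ℝ)),
      h q.1 q.2 =
        if 0 < (1 / 2 : ℝ) * (∫ lam : ℝ, (h q.1 lam - s lam)) - q.2 then 1 else -1 := by
  have hsmeas : Measurable s := by
    have : s = fun lam => if lam < 0 then (1:ℝ) else -1 := funext hs
    rw [this]
    exact Measurable.ite measurableSet_Iio measurable_const measurable_const
  have hms : Measurable (fun p : X × ℝ => h p.1 p.2 - s p.2) :=
    hmeas.sub (hsmeas.comp measurable_snd)
  have hI : Measurable fun x => ∫ lam : ℝ, (h x lam - s lam) :=
    (StronglyMeasurable.integral_prod_right' hms.stronglyMeasurable).measurable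
  have hu : Measurable (fun x => (1 / 2 : ℝ) * ∫ lam : ℝ, (h x lam - s lam)) :=
    measurable_const.mul hI
  refine ⟨hu, ?_⟩
  -- the bad set is measurable
  have hDm : MeasurableSet {q : X × ℝ | ¬ (h q.1 q.2 =
      if 0 < (1 / 2 : ℝ) * (∫ lam : ℝ, (h q.1 lam - s lam)) - q.2 then 1 else -1)} := by
    have hf : Measurable fun q : X × ℝ => h q.1 q.2 := hmeas
    have hg : Measurable fun q : X × ℝ =>
        (if 0 < (1 / 2 : ℝ) * (∫ lam : ℝ, (h q.1 lam - s lam)) - q.2 then (1:ℝ) else -1) := by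
      refine Measurable.ite ?_ measurable_const measurable_const
      exact measurableSet_lt measurable_const ((hu.comp measurable_fst).sub measurable_snd)
    exact (measurableSet_eq_fun hf hg).compl
  rw [ae_iff, Measure.measure_prod_null hDm]
  have hkey : ∀ᵐ x ∂μ, (volume : Measure ℝ) {lam : ℝ | ¬ (h x lam =
      if 0 < (1 / 2 : ℝ) * (∫ t : ℝ, (h x t - s t)) - lam then 1 else -1)} = 0 := by
    filter_upwards [hae] with x ⟨hx1, hx2, hx3⟩
    have hgm : Measurable (h x) := hmeas.comp (measurable_prodMk_left)
    exact ae_iff.mp (sign_key (h x) hgm s hs hx1 hx2 hx3)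
  filter_upwards [hkey] with x hx
  simpa using hx
end
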